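/- With B = 0, the quantity (distance between the two PDF peaks) D(ω) = M(ω) - x₀, where M(ω) = K·x₀·e^{2N₀/ω}/(K - x₀ + x₀·e^{2N₀/ω}), is strictly decreasing in ω on (0, ∞) and satisfies D(ω) → K - x₀ as ω → 0⁺ and D(ω) → 0 as ω → ∞. -/

import Mathlib

open Real Filter

/-- The distance `D(ω) = M(ω) - x₀` between the two PDF peaks is strictly decreasing on
`(0, ∞)`, tends to `K - x₀` as `ω → 0⁺`, and tends to `0` as `ω → ∞`. -/
theorem peak_distance_monotone_limits
    (K N₀ x₀ : ℝ) (hK : 0 < K) (hN₀ : 0 < N₀) (hx₀ : 0 < x₀) (hx₀K : x₀ < K)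
    (M D : ℝ → ℝ)
    (hM : ∀ ω, M ω = K * x₀ * Real.exp (2 * N₀ / ω) /
        (K - x₀ + x₀ * Real.exp (2 * N₀ / ω)))
    (hD : ∀ ω, D ω = M ω - x₀) :
    StrictAntiOn D (Set.Ioi 0) ∧
      Tendsto D (nhdsWithin 0 (Set.Ioi 0)) (nhds (K - x₀)) ∧
      Tendsto D atTop (nhds 0) := by
  have hc : 0 < K - x₀ := by linarith
  refine ⟨?_, ?_, ?_⟩
  · intro a ha b hb hab
    simp only [Set.mem_Ioi] at ha hb
    have hEb : Real.exp (2 * N₀ / b) < Real.exp (2 * N₀ / a) := by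
      apply Real.exp_lt_exp.mpr
      gcongr
    set Ea := Real.exp (2 * N₀ / a) with hEa'
    set Eb := Real.exp (2 * N₀ / b) with hEb'
    have hEap : 0 < Ea := Real.exp_pos _
    have hEbp : 0 < Eb := Real.exp_pos _
    have hda : 0 < K - x₀ + x₀ * Ea := by positivity
    have hdb : 0 < K - x₀ + x₀ * Eb := by positivity
    rw [hD, hD, hM, hM]
    have : K * x₀ * Eb / (K - x₀ + x₀ * Eb) < K * x₀ * Ea / (K - x₀ + x₀ * Ea) := by
      rw [div_lt_div_iff₀ hdb hda]
      nlinarith [mul_pos (mul_pos hK hx₀) hc, mul_pos (mul_pos (mul_pos hK hx₀) hc) (sub_pos.mpr hEb)]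
    linarith
  · have h1 : Tendsto (fun ω : ℝ => 2 * N₀ / ω) (nhdsWithin 0 (Set.Ioi 0)) atTop := by
      have := tendsto_inv_nhdsGT_zero (𝕜 := ℝ)
      have h2 := this.const_mul_atTop (by linarith : (0:ℝ) < 2 * N₀)
      simpa [div_eq_mul_inv] using h2
    have h2 : Tendsto (fun ω : ℝ => Real.exp (-(2 * N₀ / ω)))
        (nhdsWithin 0 (Set.Ioi 0)) (nhds 0) :=
      Real.tendsto_exp_neg_atTop_nhds_zero.comp h1
    have hlim : Tendsto (fun ω : ℝ => K * x₀ / ((K - x₀) * Real.exp (-(2 * N₀ / ω)) + x₀))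
        (nhdsWithin 0 (Set.Ioi 0)) (nhds (K - x₀ + x₀)) := by
      have : Tendsto (fun ω : ℝ => (K - x₀) * Real.exp (-(2 * N₀ / ω)) + x₀)
          (nhdsWithin 0 (Set.Ioi 0)) (nhds ((K - x₀) * 0 + x₀)) :=
        ((h2.const_mul (K - x₀)).add tendsto_const_nhds)
      have hden : ((K - x₀) * 0 + x₀) = x₀ := by ring
      rw [hden] at this
      have h3 := Tendsto.div (tendsto_const_nhds (x := K * x₀)
        (f := nhdsWithin (0:ℝ) (Set.Ioi 0))) this (ne_of_gt hx₀)
      have : K * x₀ / x₀ = K - x₀ + x₀ := by field_simp; ring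
      rwa [this] at h3
    have heq : ∀ ω : ℝ, D ω =
        K * x₀ / ((K - x₀) * Real.exp (-(2 * N₀ / ω)) + x₀) - x₀ := by
      intro ω
      rw [hD, hM, Real.exp_neg]
      have hE : 0 < Real.exp (2 * N₀ / ω) := Real.exp_pos _
      have h4 : 0 < K - x₀ + x₀ * Real.exp (2 * N₀ / ω) := by positivity
      have h5 : 0 < (K - x₀) * (Real.exp (2 * N₀ / ω))⁻¹ + x₀ := by positivity
      field_simp
    have hfin := hlim.sub (tendsto_const_nhds (x := x₀))
    have hval2 : K - x₀ + x₀ - x₀ = K - x₀ := by ring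
    rw [hval2] at hfin
    exact hfin.congr fun ω => (heq ω).symm
  · have h1 : Tendsto (fun ω : ℝ => 2 * N₀ / ω) atTop (nhds 0) :=
      tendsto_id.const_div_atTop _
    have h2 : Tendsto (fun ω : ℝ => Real.exp (2 * N₀ / ω)) atTop (nhds 1) := by
      have := (Real.continuous_exp.tendsto 0).comp h1
      simpa [Function.comp_def] using this
    have hnum : Tendsto (fun ω : ℝ => K * x₀ * Real.exp (2 * N₀ / ω)) atTop
        (nhds (K * x₀ * 1)) := h2.const_mul _
    have hden : Tendsto (fun ω : ℝ => K - x₀ + x₀ * Real.exp (2 * N₀ / ω)) atTop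
        (nhds (K - x₀ + x₀ * 1)) := tendsto_const_nhds.add (h2.const_mul _)
    have hKne : K - x₀ + x₀ * 1 ≠ 0 := by
      rw [mul_one]; intro h; linarith
    have hMlim := hnum.div hden hKne
    have hval : K * x₀ * 1 / (K - x₀ + x₀ * 1) = x₀ := by
      field_simp
      ring
    rw [hval] at hMlim
    have := hMlim.sub (tendsto_const_nhds (x := x₀))
    rw [sub_self] at this
    exact this.congr fun ω => by simp [Pi.div_apply, hD ω, hM ω]
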